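/- Let A, C ∈ ℝ^{n×n}, r ≥ ε ≥ 0, let d, q : [0,∞) → [−1,1] be measurable, let x be a solution of system (2.12), and define v(t) := x(t−r) − x(t−r−εd(t)) for t ≥ 0. Then for almost every t ≥ r + ε with d(t) ≥ 0, the identity v(t) = (exp(Aε|d(t)|) − I) x(t−r−εd(t)) − ∫_{t−r−εd(t)}^{t−r} exp(A(t−r−s)) q(s) C v(s) ds holds. -/

import Mathlib

open MeasureTheory

/-- Matrix-vector multiplication between Euclidean spaces. -/
noncomputable def mv {n m : ℕ} (A : Matrix (Fin n) (Fin m) ℝ)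
    (x : EuclideanSpace ℝ (Fin m)) : EuclideanSpace ℝ (Fin n) :=
  Matrix.toEuclideanLin A x

/-- `mexp A t = exp (t A)`, the matrix exponential. -/
noncomputable def mexp {n : ℕ} (A : Matrix (Fin n) (Fin n) ℝ) (t : ℝ) :
    Matrix (Fin n) (Fin n) ℝ :=
  NormedSpace.exp (t • A)

namespace S13
variable {n : ℕ}
noncomputable def Tc (n : ℕ) : Matrix (Fin n) (Fin n) ℝ →L[ℝ]
    (EuclideanSpace ℝ (Fin n) →L[ℝ] EuclideanSpace ℝ (Fin n)) := by
  letI : SeminormedRing (Matrix (Fin n) (Fin n) ℝ) := Matrix.linftyOpSemiNormedRing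
  letI : NormedRing (Matrix (Fin n) (Fin n) ℝ) := Matrix.linftyOpNormedRing
  letI : NormedAlgebra ℝ (Matrix (Fin n) (Fin n) ℝ) := Matrix.linftyOpNormedAlgebra
  exact LinearMap.toContinuousLinearMap
    ((LinearMap.toContinuousLinearMap.toLinearMap).comp
      (Matrix.toEuclideanLin (𝕜 := ℝ) (m := Fin n) (n := Fin n)).toLinearMap)
lemma Tc_apply (M : Matrix (Fin n) (Fin n) ℝ) (w : EuclideanSpace ℝ (Fin n)) :
    Tc n M w = mv M w := rfl

lemma mv_mul (M N : Matrix (Fin n) (Fin n) ℝ) (w) : mv (M * N) w = mv M (mv N w) := by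
  simp [mv, Matrix.toEuclideanLin_apply, Matrix.mulVec_mulVec]

lemma mv_one (w : EuclideanSpace ℝ (Fin n)) : mv (1 : Matrix (Fin n) (Fin n) ℝ) w = w := by
  simp [mv, Matrix.toEuclideanLin_apply]

lemma mv_sub_mat (M N : Matrix (Fin n) (Fin n) ℝ) (w) : mv (M - N) w = mv M w - mv N w := by
  simp [mv, map_sub, LinearMap.sub_apply]

lemma mv_sub (M : Matrix (Fin n) (Fin n) ℝ) (w₁ w₂) : mv M (w₁ - w₂) = mv M w₁ - mv M w₂ := by
  simp [mv, map_sub]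

lemma mv_add (M : Matrix (Fin n) (Fin n) ℝ) (w₁ w₂) : mv M (w₁ + w₂) = mv M w₁ + mv M w₂ := by
  simp [mv, map_add]

lemma mv_neg (M : Matrix (Fin n) (Fin n) ℝ) (w) : mv M (-w) = -mv M w := by
  simp [mv, map_neg]

lemma mexp_zero (A : Matrix (Fin n) (Fin n) ℝ) : mexp A 0 = 1 := by
  simp [mexp, NormedSpace.exp_zero]

lemma continuous_clm_apply_aux {X : Type*} [TopologicalSpace X]
    {Φ : X → (EuclideanSpace ℝ (Fin n) →L[ℝ] EuclideanSpace ℝ (Fin n))} (hΦ : Continuous Φ)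
    {g : X → EuclideanSpace ℝ (Fin n)} (hg : Continuous g) :
    Continuous fun x => Φ x (g x) :=
  isBoundedBilinearMap_apply.continuous.comp (hΦ.prodMk hg)

lemma measurable_clm_apply_aux {X : Type*} [MeasurableSpace X]
    {Φ : X → (EuclideanSpace ℝ (Fin n) →L[ℝ] EuclideanSpace ℝ (Fin n))} (hΦ : Measurable Φ)
    {g : X → EuclideanSpace ℝ (Fin n)} (hg : Measurable g) :
    Measurable fun x => Φ x (g x) :=
  isBoundedBilinearMap_apply.continuous.measurable.comp (hΦ.prodMk hg)

lemma continuous_mexp_sub (A : Matrix (Fin n) (Fin n) ℝ) (b : ℝ) :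
    Continuous fun s : ℝ => mexp A (b - s) := by
  letI : SeminormedRing (Matrix (Fin n) (Fin n) ℝ) := Matrix.linftyOpSemiNormedRing
  letI : NormedRing (Matrix (Fin n) (Fin n) ℝ) := Matrix.linftyOpNormedRing
  letI : NormedAlgebra ℝ (Matrix (Fin n) (Fin n) ℝ) := Matrix.linftyOpNormedAlgebra
  letI : NormedAlgebra ℚ (Matrix (Fin n) (Fin n) ℝ) := NormedAlgebra.restrictScalars ℚ ℝ _
  exact (NormedSpace.exp_continuous (𝔸 := Matrix (Fin n) (Fin n) ℝ)).comp (((continuous_const.sub continuous_id).smul continuous_const))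

lemma continuous_Phi (A B : Matrix (Fin n) (Fin n) ℝ) (b : ℝ) :
    Continuous fun s : ℝ => Tc n (mexp A (b - s) * B) :=
  (Tc n).continuous.comp ((continuous_mexp_sub A b).matrix_mul continuous_const)

lemma continuous_Phi' (A : Matrix (Fin n) (Fin n) ℝ) (b : ℝ) :
    Continuous fun s : ℝ => Tc n (mexp A (b - s)) :=
  (Tc n).continuous.comp (continuous_mexp_sub A b)

lemma hasDerivAt_mv_mexp (A : Matrix (Fin n) (Fin n) ℝ) (b : ℝ)
    (w : EuclideanSpace ℝ (Fin n)) (s : ℝ) :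
    HasDerivAt (fun s => mv (mexp A (b - s)) w) (-(mv (mexp A (b - s) * A) w)) s := by
  letI : SeminormedRing (Matrix (Fin n) (Fin n) ℝ) := Matrix.linftyOpSemiNormedRing
  letI : NormedRing (Matrix (Fin n) (Fin n) ℝ) := Matrix.linftyOpNormedRing
  letI : NormedAlgebra ℝ (Matrix (Fin n) (Fin n) ℝ) := Matrix.linftyOpNormedAlgebra
  have h1 : HasDerivAt (fun τ : ℝ => NormedSpace.exp (τ • A))
      (NormedSpace.exp ((b - s) • A) * A) (b - s) := hasDerivAt_exp_smul_const A (b - s)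
  have h2 : HasDerivAt (fun u : ℝ => b - u) (-1 : ℝ) s := by
    simpa using (hasDerivAt_id' s).const_sub b
  have h3 : HasDerivAt (fun u : ℝ => mexp A (b - u))
      ((-1 : ℝ) • (NormedSpace.exp ((b - s) • A) * A)) s := HasDerivAt.scomp s h1 h2
  have h4 := ((Tc n).hasFDerivAt.comp_hasDerivAt s h3).clm_apply (hasDerivAt_const s w)
  convert (show HasDerivAt (fun s => mv (mexp A (b - s)) w) _ s from h4) using 1
  simp only [Function.comp]
  show -mv (mexp A (b - s) * A) w = mv ((-1:ℝ) • (NormedSpace.exp ((b - s) • A) * A)) w + mv (mexp A (b - s)) 0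
  simp [← Tc_apply, mexp]

lemma integral_mv_mexp (A : Matrix (Fin n) (Fin n) ℝ) (b u c : ℝ)
    (w : EuclideanSpace ℝ (Fin n)) :
    ∫ s in u..c, mv (mexp A (b - s) * A) w =
      mv (mexp A (b - u)) w - mv (mexp A (b - c)) w := by
  have hderiv : ∀ s ∈ Set.uIcc u c,
      HasDerivAt (fun s => -(mv (mexp A (b - s)) w)) (mv (mexp A (b - s) * A) w) s := by
    intro s _
    have := (hasDerivAt_mv_mexp A b w s).neg; rwa [neg_neg] at this
  have hcont : Continuous fun s => mv (mexp A (b - s) * A) w := by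
    simpa only [Tc_apply] using continuous_clm_apply_aux (continuous_Phi A A b) continuous_const
  have := intervalIntegral.integral_eq_sub_of_hasDerivAt hderiv (hcont.intervalIntegrable u c)
  rw [this]; abel
end S13

set_option maxHeartbeats 2000000

open S13

theorem stmt_13 (n : ℕ) (A C : Matrix (Fin n) (Fin n) ℝ)
    (r ε : ℝ) (hε : 0 ≤ ε) (hεr : ε ≤ r)
    (d q : ℝ → ℝ) (hd : Measurable d) (hd1 : ∀ t, 0 ≤ t → d t ∈ Set.Icc (-1 : ℝ) 1)
    (hq : Measurable q) (hq1 : ∀ t, 0 ≤ t → q t ∈ Set.Icc (-1 : ℝ) 1)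
    (x : ℝ → EuclideanSpace ℝ (Fin n))
    (hxc : ContinuousOn x (Set.Ici (-(r + ε))))
    (hxode : ∀ t : ℝ, 0 ≤ t →
      x t = x 0 + ∫ s in (0 : ℝ)..t,
        (mv A (x s) + q s • mv C (x (s - r - ε * d s) - x (s - r))))
    (v : ℝ → EuclideanSpace ℝ (Fin n))
    (hv : ∀ t : ℝ, 0 ≤ t → v t = x (t - r) - x (t - r - ε * d t)) :
    ∀ᵐ t ∂(volume.restrict (Set.Ici (r + ε))), 0 ≤ d t →
      v t = mv (mexp A (ε * |d t|) - 1) (x (t - r - ε * d t)) -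
        ∫ s in (t - r - ε * d t)..(t - r),
          mv (mexp A (t - r - s)) (q s • mv C (v s)) := by
  classical
  have hr0 : (0:ℝ) ≤ r := hε.trans hεr
  -- continuous extension of x
  set x' : ℝ → EuclideanSpace ℝ (Fin n) := fun s => x (max s (-(r+ε))) with hx'def
  have hx'c : Continuous x' :=
    hxc.comp_continuous (continuous_id.max continuous_const) (fun s => Set.mem_Ici.2 (le_max_right _ _))
  have hx'eq : ∀ s : ℝ, -(r+ε) ≤ s → x' s = x s := by
    intro s hs; simp only [hx'def, max_eq_left hs]
  -- the vector field
  set f : ℝ → EuclideanSpace ℝ (Fin n) :=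
    fun u => mv A (x' u) + q u • mv C (x' (u - r - ε * d u) - x' (u - r)) with hfdef
  have harg : ∀ u : ℝ, 0 ≤ u →
      (-(r+ε) ≤ u ∧ -(r+ε) ≤ u - r - ε * d u ∧ -(r+ε) ≤ u - r) := by
    intro u hu
    have h := hd1 u hu
    have h1 := h.1; have h2 := h.2
    refine ⟨by linarith, by nlinarith, by linarith⟩
  have hfx : ∀ u : ℝ, 0 ≤ u →
      f u = mv A (x u) + q u • mv C (x (u - r - ε * d u) - x (u - r)) := by
    intro u hu
    obtain ⟨h1, h2, h3⟩ := harg u hu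
    simp only [hfdef, hx'eq _ h1, hx'eq _ h2, hx'eq _ h3]
  -- measurability of f
  have hf_meas : Measurable f := by
    have m1 : Measurable fun u : ℝ => x' u := hx'c.measurable
    have m2 : Measurable fun u : ℝ => x' (u - r - ε * d u) :=
      hx'c.measurable.comp (((measurable_id.sub measurable_const)).sub (hd.const_mul ε))
    have m3 : Measurable fun u : ℝ => x' (u - r) :=
      hx'c.measurable.comp (measurable_id.sub measurable_const)
    have m4 : Measurable fun u : ℝ => mv C (x' (u - r - ε * d u) - x' (u - r)) := by
      simpa only [Tc_apply, Pi.sub_apply] using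
        measurable_clm_apply_aux (measurable_const (a := Tc n C)) (m2.sub m3)
    have m5 : Measurable fun u : ℝ => mv A (x' u) := by
      simpa only [Tc_apply] using
        measurable_clm_apply_aux (measurable_const (a := Tc n A)) m1
    exact m5.add (hq.smul m4)
  -- bound for f on [0, T]
  have hfbd : ∀ T : ℝ, 0 ≤ T → ∃ M : ℝ, 0 ≤ M ∧ ∀ u ∈ Set.Icc (0:ℝ) T, ‖f u‖ ≤ M := by
    intro T hT
    obtain ⟨M0, hM0⟩ := (isCompact_Icc (a := -(r+ε)) (b := T + ε)).exists_bound_of_continuousOn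
      hx'c.continuousOn
    have hne : -(r+ε) ∈ Set.Icc (-(r+ε)) (T+ε) := ⟨le_refl _, by linarith⟩
    have hM0nn : 0 ≤ M0 := le_trans (norm_nonneg _) (hM0 _ hne)
    refine ⟨‖Tc n A‖ * M0 + ‖Tc n C‖ * (M0 + M0), by positivity, ?_⟩
    intro u hu
    obtain ⟨h1, h2, h3⟩ := harg u hu.1
    have hqmem := hq1 u hu.1
    have hqabs : |q u| ≤ 1 := abs_le.2 ⟨hqmem.1, hqmem.2⟩
    have hdmem := hd1 u hu.1
    have e1 : ‖x' u‖ ≤ M0 := hM0 _ ⟨h1, by linarith [hu.2]⟩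
    have e2 : ‖x' (u - r - ε * d u)‖ ≤ M0 := hM0 _ ⟨h2, by nlinarith [hdmem.1, hu.2]⟩
    have e3 : ‖x' (u - r)‖ ≤ M0 := hM0 _ ⟨h3, by linarith [hu.2]⟩
    have b1 : ‖mv A (x' u)‖ ≤ ‖Tc n A‖ * M0 := by
      rw [← Tc_apply]
      calc ‖Tc n A (x' u)‖ ≤ ‖Tc n A‖ * ‖x' u‖ := (Tc n A).le_opNorm _
        _ ≤ ‖Tc n A‖ * M0 := by nlinarith [norm_nonneg (Tc n A)]
    have b2 : ‖mv C (x' (u - r - ε * d u) - x' (u - r))‖ ≤ ‖Tc n C‖ * (M0 + M0) := by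
      rw [← Tc_apply]
      calc ‖Tc n C (x' (u - r - ε * d u) - x' (u - r))‖
          ≤ ‖Tc n C‖ * ‖x' (u - r - ε * d u) - x' (u - r)‖ := (Tc n C).le_opNorm _
        _ ≤ ‖Tc n C‖ * (M0 + M0) := by
            have := norm_sub_le (x' (u - r - ε * d u)) (x' (u - r))
            nlinarith [norm_nonneg (Tc n C)]
    calc ‖f u‖ ≤ ‖mv A (x' u)‖ + ‖q u • mv C (x' (u - r - ε * d u) - x' (u - r))‖ :=
          norm_add_le _ _
      _ = ‖mv A (x' u)‖ + |q u| * ‖mv C (x' (u - r - ε * d u) - x' (u - r))‖ := by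
          rw [norm_smul, Real.norm_eq_abs]
      _ ≤ ‖Tc n A‖ * M0 + ‖Tc n C‖ * (M0 + M0) := by
          nlinarith [abs_nonneg (q u), norm_nonneg (mv C (x' (u - r - ε * d u) - x' (u - r)))]
  -- interval integrability
  have hint : ∀ (Φ : ℝ → (EuclideanSpace ℝ (Fin n) →L[ℝ] EuclideanSpace ℝ (Fin n))),
      Continuous Φ → ∀ t1 t2 : ℝ, 0 ≤ t1 → t1 ≤ t2 →
      IntervalIntegrable (fun s => Φ s (f s)) volume t1 t2 := by
    intro Φ hΦ t1 t2 h1 h12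
    rw [intervalIntegrable_iff_integrableOn_Ioc_of_le h12]
    obtain ⟨M, hM0, hM⟩ := hfbd t2 (h1.trans h12)
    obtain ⟨MΦ, hMΦ⟩ := (isCompact_Icc (a := t1) (b := t2)).exists_bound_of_continuousOn
      hΦ.continuousOn
    have hMΦnn : 0 ≤ MΦ := le_trans (norm_nonneg _) (hMΦ t1 ⟨le_refl _, h12⟩)
    refine Integrable.mono' (integrable_const (MΦ * M))
      ((measurable_clm_apply_aux hΦ.measurable hf_meas).aestronglyMeasurable) ?_
    refine (ae_restrict_iff' measurableSet_Ioc).2 (Filter.Eventually.of_forall ?_)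
    intro s hs
    calc ‖Φ s (f s)‖ ≤ ‖Φ s‖ * ‖f s‖ := (Φ s).le_opNorm _
      _ ≤ MΦ * M := by
          have i1 := hMΦ s ⟨hs.1.le, hs.2⟩
          have i2 := hM s ⟨h1.trans hs.1.le, hs.2⟩
          nlinarith [norm_nonneg (Φ s), norm_nonneg (f s)]
  have hfint : ∀ t1 t2 : ℝ, 0 ≤ t1 → t1 ≤ t2 → IntervalIntegrable f volume t1 t2 := by
    intro t1 t2 h1 h12
    simpa using hint (fun _ => ContinuousLinearMap.id ℝ _) continuous_const t1 t2 h1 h12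
  -- difference formula
  have hxdiff : ∀ t1 t2 : ℝ, 0 ≤ t1 → t1 ≤ t2 → x t2 - x t1 = ∫ u in t1..t2, f u := by
    intro t1 t2 h1 h12
    have h2 : (0:ℝ) ≤ t2 := h1.trans h12
    have e1 : ∀ s : ℝ, 0 ≤ s →
        (∫ u in (0:ℝ)..s, (mv A (x u) + q u • mv C (x (u - r - ε * d u) - x (u - r))))
          = ∫ u in (0:ℝ)..s, f u := by
      intro s hs
      refine intervalIntegral.integral_congr ?_
      intro u hu
      rw [Set.uIcc_of_le hs] at hu
      exact (hfx u hu.1).symm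
    rw [hxode t2 h2, hxode t1 h1, e1 t2 h2, e1 t1 h1, add_sub_add_left_eq_sub]
    exact intervalIntegral.integral_interval_sub_left (hfint 0 t2 le_rfl h2)
      (hfint 0 t1 le_rfl h1)
  -- main pointwise argument
  refine (ae_restrict_mem measurableSet_Ici).mono ?_
  intro t ht hdt
  have htr : r + ε ≤ t := ht
  have ht0 : (0:ℝ) ≤ t := by linarith
  have hdmem := hd1 t ht0
  have hεd0 : 0 ≤ ε * d t := mul_nonneg hε hdt
  have hεd : ε * d t ≤ ε := by nlinarith [hdmem.2]
  set b := t - r with hbdef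
  set a := t - r - ε * d t with hadef
  have ha0 : (0:ℝ) ≤ a := by rw [hadef]; linarith
  have hab : a ≤ b := by rw [hadef, hbdef]; linarith
  have hb0 : (0:ℝ) ≤ b := ha0.trans hab
  have hba : b - a = ε * d t := by rw [hadef, hbdef]; ring
  have hx'a : x' a = x a := hx'eq a (by linarith)
  set Φ : ℝ → (EuclideanSpace ℝ (Fin n) →L[ℝ] EuclideanSpace ℝ (Fin n)) :=
    fun s => Tc n (mexp A (b - s) * A) with hΦdef
  have hΦc : Continuous Φ := continuous_Phi A A b
  set Φ' : ℝ → (EuclideanSpace ℝ (Fin n) →L[ℝ] EuclideanSpace ℝ (Fin n)) :=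
    fun s => Tc n (mexp A (b - s)) with hΦ'def
  have hΦ'c : Continuous Φ' := continuous_Phi' A b
  have hP : IntervalIntegrable (fun s => Φ' s (f s)) volume a b := hint Φ' hΦ'c a b ha0 hab
  set P := ∫ s in a..b, Φ' s (f s) with hPdef
  have hcont1 : Continuous fun s : ℝ => mv (mexp A (b - s)) (mv A (x' s)) := by
    simpa only [Tc_apply] using continuous_clm_apply_aux (continuous_Phi' A b)
      (continuous_clm_apply_aux (continuous_const (y := Tc n A)) hx'c)
  have step1 : (∫ s in a..b, mv (mexp A (b - s)) (q s • mv C (v s)))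
      = (∫ s in a..b, mv (mexp A (b - s)) (mv A (x' s))) - P := by
    have he : ∀ s ∈ Set.uIcc a b, mv (mexp A (b - s)) (q s • mv C (v s))
        = mv (mexp A (b - s)) (mv A (x' s)) - Φ' s (f s) := by
      intro s hs
      rw [Set.uIcc_of_le hab] at hs
      have hs0 : 0 ≤ s := ha0.trans hs.1
      have hsr : -(r+ε) ≤ s := by linarith
      have hqv : q s • mv C (v s) = mv A (x s) - f s := by
        rw [hfx s hs0, hv s hs0, ← neg_sub (x (s - r)) (x (s - r - ε * d s)), mv_neg, smul_neg]
        abel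
      rw [hqv, mv_sub, hx'eq s hsr]
      rfl
    rw [intervalIntegral.integral_congr he]
    exact intervalIntegral.integral_sub (hcont1.intervalIntegrable a b) hP
  have hcont2 : Continuous fun s : ℝ => mv (mexp A (b - s) * A) (x' a) := by
    simpa only [Tc_apply] using continuous_clm_apply_aux (continuous_Phi A A b) continuous_const
  have hcont3 : Continuous fun s : ℝ => mv (mexp A (b - s) * A) (x' s - x' a) := by
    simpa only [Tc_apply, Pi.sub_apply] using continuous_clm_apply_aux (continuous_Phi A A b)
      (hx'c.sub continuous_const)
  have step2 : (∫ s in a..b, mv (mexp A (b - s)) (mv A (x' s)))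
      = (∫ s in a..b, mv (mexp A (b - s) * A) (x' a))
        + ∫ s in a..b, mv (mexp A (b - s) * A) (x' s - x' a) := by
    rw [← intervalIntegral.integral_add (hcont2.intervalIntegrable a b)
      (hcont3.intervalIntegrable a b)]
    refine intervalIntegral.integral_congr ?_
    intro s _
    beta_reduce
    rw [← mv_add, show x' a + (x' s - x' a) = x' s from by abel, mv_mul]
  have step3 : (∫ s in a..b, mv (mexp A (b - s) * A) (x' a))
      = mv (mexp A (b - a)) (x' a) - x' a := by
    rw [integral_mv_mexp A b a b (x' a), sub_self, mexp_zero, mv_one]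
  have hfub : (∫ s in a..b, mv (mexp A (b - s) * A) (x' s - x' a)) = P - (x b - x a) := by
    set H : ℝ → ℝ → EuclideanSpace ℝ (Fin n) :=
      fun s u => if u ≤ s then Φ s (f u) else 0 with hHdef
    set μ := volume.restrict (Set.Ioc a b) with hμdef
    haveI : IsFiniteMeasure μ :=
      ⟨by rw [hμdef, Measure.restrict_apply_univ]; exact measure_Ioc_lt_top⟩
    obtain ⟨M, hMnn, hM⟩ := hfbd b hb0
    obtain ⟨MΦ, hMΦ⟩ := (isCompact_Icc (a := a) (b := b)).exists_bound_of_continuousOn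
      hΦc.continuousOn
    have hMΦnn : 0 ≤ MΦ := le_trans (norm_nonneg _) (hMΦ a ⟨le_refl _, hab⟩)
    have hHmeas : Measurable (Function.uncurry H) := by
      refine Measurable.ite (measurableSet_le measurable_snd measurable_fst) ?_ measurable_const
      exact measurable_clm_apply_aux (hΦc.measurable.comp measurable_fst)
        (hf_meas.comp measurable_snd)
    have hHint : Integrable (Function.uncurry H) (μ.prod μ) := by
      refine Integrable.mono' (integrable_const (MΦ * M)) hHmeas.aestronglyMeasurable ?_
      rw [hμdef, Measure.prod_restrict]
      refine (ae_restrict_mem (measurableSet_Ioc.prod measurableSet_Ioc)).mono ?_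
      rintro ⟨s, u⟩ ⟨hs, hu⟩
      simp only [Function.uncurry, hHdef]
      split_ifs with h
      · calc ‖Φ s (f u)‖ ≤ ‖Φ s‖ * ‖f u‖ := (Φ s).le_opNorm _
          _ ≤ MΦ * M := by
              have i1 := hMΦ s ⟨hs.1.le, hs.2⟩
              have i2 := hM u ⟨ha0.trans hu.1.le, hu.2⟩
              nlinarith [norm_nonneg (Φ s), norm_nonneg (f u)]
      · simpa using mul_nonneg hMΦnn hMnn
    have hPint : IntervalIntegrable (fun u => mv (mexp A (b - u)) (f u)) volume a b := hP
    calc (∫ s in a..b, mv (mexp A (b - s) * A) (x' s - x' a))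
        = ∫ s in Set.Ioc a b, mv (mexp A (b - s) * A) (x' s - x' a) :=
          intervalIntegral.integral_of_le hab
      _ = ∫ s in Set.Ioc a b, ∫ u in Set.Ioc a b, H s u := by
          refine setIntegral_congr_fun measurableSet_Ioc ?_
          intro s hs
          beta_reduce
          have hs0 : 0 ≤ s := ha0.trans hs.1.le
          have e0 : x' s - x' a = ∫ u in a..s, f u := by
            rw [hx'eq s (by linarith), hx'a]; exact hxdiff a s ha0 hs.1.le
          have e1 : mv (mexp A (b - s) * A) (x' s - x' a) = Φ s (x' s - x' a) := rfl
          rw [e1, e0, ← ContinuousLinearMap.intervalIntegral_comp_comm _ (hfint a s ha0 hs.1.le),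
            intervalIntegral.integral_of_le hs.1.le]
          calc (∫ u in Set.Ioc a s, Φ s (f u))
              = ∫ u in Set.Ioc a b ∩ Set.Iic s, Φ s (f u) := by
                rw [Set.Ioc_inter_Iic, min_eq_right hs.2]
            _ = ∫ u in Set.Ioc a b, (Set.Iic s).indicator (fun u => Φ s (f u)) u :=
                (setIntegral_indicator measurableSet_Iic).symm
            _ = ∫ u in Set.Ioc a b, H s u := by
                refine setIntegral_congr_fun measurableSet_Ioc ?_
                intro u _
                simp [hHdef, Set.indicator_apply, Set.mem_Iic]
      _ = ∫ u in Set.Ioc a b, ∫ s in Set.Ioc a b, H s u := integral_integral_swap hHint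
      _ = ∫ u in Set.Ioc a b, (mv (mexp A (b - u)) (f u) - f u) := by
          refine setIntegral_congr_fun measurableSet_Ioc ?_
          intro u hu
          beta_reduce
          have eset : Set.Ioc a b ∩ Set.Ici u = Set.Icc u b := by
            ext s
            simp only [Set.mem_inter_iff, Set.mem_Ioc, Set.mem_Ici, Set.mem_Icc]
            constructor
            · rintro ⟨⟨_, h2⟩, h3⟩; exact ⟨h3, h2⟩
            · rintro ⟨h1, h2⟩; exact ⟨⟨lt_of_lt_of_le hu.1 h1, h2⟩, h1⟩
          calc (∫ s in Set.Ioc a b, H s u)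
              = ∫ s in Set.Ioc a b, (Set.Ici u).indicator (fun s => Φ s (f u)) s := by
                refine setIntegral_congr_fun measurableSet_Ioc ?_
                intro s _
                simp [hHdef, Set.indicator_apply, Set.mem_Ici]
            _ = ∫ s in Set.Ioc a b ∩ Set.Ici u, Φ s (f u) := setIntegral_indicator measurableSet_Ici
            _ = ∫ s in Set.Icc u b, Φ s (f u) := by rw [eset]
            _ = ∫ s in Set.Ioc u b, Φ s (f u) := integral_Icc_eq_integral_Ioc
            _ = ∫ s in u..b, mv (mexp A (b - s) * A) (f u) :=
                (intervalIntegral.integral_of_le hu.2).symm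
            _ = mv (mexp A (b - u)) (f u) - f u := by
                rw [integral_mv_mexp A b u b (f u), sub_self, mexp_zero, mv_one]
      _ = (∫ u in a..b, mv (mexp A (b - u)) (f u)) - ∫ u in a..b, f u := by
          rw [← intervalIntegral.integral_of_le hab,
            intervalIntegral.integral_sub hPint (hfint a b ha0 hab)]
      _ = P - (x b - x a) := by rw [hxdiff a b ha0 hab]; rfl
  have habs : ε * |d t| = b - a := by rw [abs_of_nonneg hdt, hba]
  rw [hv t ht0, habs, step1, step2, step3, hfub, hx'a, mv_sub_mat, mv_one]
  rw [← hadef, ← hbdef]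
  abel
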